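/- Let A be a C*-algebra and let B be a closed *-subalgebra of A that contains an approximate unit for A, meaning there is a net (e_i)_{i∈I} of elements of B with 0 ≤ e_i and ‖e_i‖ ≤ 1 such that ‖e_i a − a‖ → 0 for every a ∈ A. Then the inclusion of B into A extends to an injective *-homomorphism from the multiplier algebra M(B) into the multiplier algebra M(A) (i.e. a map whose composition with the canonical embedding B → M(B) agrees with the composition of the inclusion B ⊆ A with the canonical embedding A → M(A)), and this map induces an injective *-homomorphism of the corona algebra M(B)/B into the corona algebra M(A)/A. -/

import Mathlib

open MultiplierAlgebra Filter

/-- Cauchy criterion for nets indexed by a directed preorder. -/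
theorem cauchySeq_of_dist_aux {α : Type*} [PseudoMetricSpace α] {I : Type*} [Nonempty I]
    [Preorder I] [IsDirected I (· ≤ ·)] {u : I → α}
    (H : ∀ ε > 0, ∃ N, ∀ m, N ≤ m → ∀ n, N ≤ n → dist (u m) (u n) < ε) : CauchySeq u := by
  rw [CauchySeq, cauchy_map_iff', prod_atTop_atTop_eq]
  rw [Metric.uniformity_basis_dist.tendsto_right_iff]
  intro ε hε
  obtain ⟨N, hN⟩ := H ε hε
  rw [eventually_atTop_prod_self']
  exact ⟨N, fun k hk l hl => hN k hk l hl⟩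

/-- If `B` is a C*-subalgebra of `A` (realized here via an injective *-homomorphism
`j : B → A` with closed range) containing an approximate unit for `A`, then the inclusion
extends to an injective *-homomorphism `Φ : M(B) → M(A)` of multiplier algebras which is
compatible with the canonical embeddings, and `Φ` induces an injective *-homomorphism of
the corona `M(B)/B` into the corona `M(A)/A` (expressed by the condition that an element
of `M(B)` whose image under `Φ` lies in the canonical copy of `A` must already lie in the
canonical copy of `B`). -/
theorem multiplier_algebra_embedding_of_approx_unit
    (A : Type u) [NonUnitalCStarAlgebra A]
    (B : Type u) [NonUnitalCStarAlgebra B] [PartialOrder B] [StarOrderedRing B]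
    (j : B →⋆ₙₐ[ℂ] A) (hj : Function.Injective j) (hrange : IsClosed (Set.range j))
    (I : Type) [Nonempty I] [Preorder I] [IsDirected I (· ≤ ·)]
    (e : I → B) (hpos : ∀ i, 0 ≤ e i) (hnorm : ∀ i, ‖e i‖ ≤ 1)
    (happrox : ∀ a : A, Tendsto (fun i => ‖j (e i) * a - a‖) atTop (nhds 0)) :
    ∃ Φ : 𝓜(ℂ, B) →⋆ₐ[ℂ] 𝓜(ℂ, A),
      Function.Injective Φ ∧
      (∀ b : B, Φ (b : 𝓜(ℂ, B)) = ((j b : A) : 𝓜(ℂ, A))) ∧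
      (∀ m : 𝓜(ℂ, B), (∃ a : A, Φ m = (a : 𝓜(ℂ, A))) → ∃ b : B, m = (b : 𝓜(ℂ, B))) := by
  -- basic facts about the approximate unit
  have hsa : ∀ i, star (e i) = e i := fun i => (IsSelfAdjoint.of_nonneg (hpos i)).star_eq
  have hsa' : ∀ i, star (j (e i)) = j (e i) := fun i => by rw [← map_star, hsa]
  have hA1 : ∀ a : A, Tendsto (fun i => j (e i) * a) atTop (nhds a) := by
    intro a
    rw [tendsto_iff_norm_sub_tendsto_zero]
    exact happrox a
  have hA2 : ∀ a : A, Tendsto (fun i => a * j (e i)) atTop (nhds a) := by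
    intro a
    have h := (hA1 (star a)).star
    simp only [star_mul, star_star, hsa'] at h
    simpa using h
  have hiso : Isometry j := NonUnitalStarAlgHom.isometry j hj
  have hemb := hiso.isEmbedding
  have hB1 : ∀ b : B, Tendsto (fun i => e i * b) atTop (nhds b) := by
    intro b
    rw [hemb.tendsto_nhds_iff]
    have := hA1 (j b)
    simpa [Function.comp_def, map_mul] using this
  have hB2 : ∀ b : B, Tendsto (fun i => b * e i) atTop (nhds b) := by
    intro b
    rw [hemb.tendsto_nhds_iff]
    have := hA2 (j b)
    simpa [Function.comp_def, map_mul] using this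
  -- cancellation lemmas
  have hcancelA : ∀ d d' : A, (∀ x, d * x = d' * x) → d = d' := by
    intro d d' h
    refine tendsto_nhds_unique (hA2 d) ?_
    simp only [h]
    exact hA2 d'
  have hcancelA' : ∀ d d' : A, (∀ x, x * d = x * d') → d = d' := by
    intro d d' h
    refine tendsto_nhds_unique (hA1 d) ?_
    simp only [h]
    exact hA1 d'
  have hcancelB : ∀ d d' : B, (∀ x, d * x = d' * x) → d = d' := by
    intro d d' h
    refine tendsto_nhds_unique (hB2 d) ?_
    simp only [h]
    exact hB2 d'
  have hcancelB' : ∀ d d' : B, (∀ x, x * d = x * d') → d = d' := by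
    intro d d' h
    refine tendsto_nhds_unique (hB1 d) ?_
    simp only [h]
    exact hB1 d'
  -- module properties of double centralizers
  have hfstmul : ∀ (m : 𝓜(ℂ, B)) (x y : B), m.fst (x * y) = m.fst x * y := by
    intro m x y
    refine hcancelB' _ _ fun c => ?_
    rw [← m.central, ← mul_assoc, m.central, mul_assoc]
  have hsndmul : ∀ (m : 𝓜(ℂ, B)) (x y : B), m.snd (x * y) = x * m.snd y := by
    intro m x y
    refine hcancelB _ _ fun c => ?_
    rw [m.central, mul_assoc, ← m.central, ← mul_assoc]
  -- the key existence of limits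
  have exL : ∀ (m : 𝓜(ℂ, B)) (a : A),
      ∃ l, Tendsto (fun i => j (m.fst (e i)) * a) atTop (nhds l) := by
    intro m a
    apply cauchySeq_tendsto_of_complete
    apply cauchySeq_of_dist_aux
    intro ε hε
    set C : ℝ := ‖m.fst‖ + 1 with hC
    have hCpos : (0:ℝ) < C := by positivity
    have hC1 : (1:ℝ) ≤ C := by
      have := norm_nonneg m.fst
      linarith
    set δ : ℝ := ε / (4 * C) with hδ
    have hδpos : (0:ℝ) < δ := by positivity
    obtain ⟨k, hk⟩ : ∃ k, ‖j (e k) * a - a‖ < δ := by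
      have h := (Metric.tendsto_nhds.mp (hA1 a) δ hδpos).exists
      obtain ⟨k, hk⟩ := h
      exact ⟨k, by simpa [dist_eq_norm] using hk⟩
    have hv : Tendsto (fun i => j (m.fst (e i)) * (j (e k) * a)) atTop
        (nhds (j (m.fst (e k)) * a)) := by
      have h1 : Tendsto (fun i => m.fst (e i * e k)) atTop (nhds (m.fst (e k))) :=
        (m.fst.continuous.tendsto _).comp (hB1 (e k))
      have h2 : Tendsto (fun i => j (m.fst (e i * e k)) * a) atTop
          (nhds (j (m.fst (e k)) * a)) :=
        ((hiso.continuous.tendsto _).comp h1).mul_const a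
      refine h2.congr fun i => ?_
      rw [hfstmul m (e i) (e k), map_mul, mul_assoc]
    have hev := Metric.tendsto_nhds.mp hv δ hδpos
    rw [atTop_basis.eventually_iff] at hev
    obtain ⟨N, -, hN⟩ := hev
    refine ⟨N, fun p hp q hq => ?_⟩
    have hbound : ∀ r, N ≤ r →
        dist (j (m.fst (e r)) * a) (j (m.fst (e k)) * a) < δ + C * δ := by
      intro r hr
      have h1 : dist (j (m.fst (e r)) * (j (e k) * a)) (j (m.fst (e k)) * a) < δ := hN hr
      have h2 : dist (j (m.fst (e r)) * a) (j (m.fst (e r)) * (j (e k) * a)) ≤ C * δ := by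
        rw [dist_eq_norm, ← mul_sub]
        calc ‖j (m.fst (e r)) * (a - j (e k) * a)‖
            ≤ ‖j (m.fst (e r))‖ * ‖a - j (e k) * a‖ := norm_mul_le _ _
          _ ≤ C * δ := by
              have hn1 : ‖j (m.fst (e r))‖ ≤ C := by
                rw [NonUnitalStarAlgHom.norm_map j hj]
                calc ‖m.fst (e r)‖ ≤ ‖m.fst‖ * ‖e r‖ := m.fst.le_opNorm _
                  _ ≤ ‖m.fst‖ * 1 := by
                      exact mul_le_mul_of_nonneg_left (hnorm r) (norm_nonneg _)
                  _ ≤ C := by rw [mul_one, hC]; linarith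
              have hn2 : ‖a - j (e k) * a‖ ≤ δ := by
                rw [norm_sub_rev]
                exact hk.le
              exact mul_le_mul hn1 hn2 (norm_nonneg _) hCpos.le
      calc dist (j (m.fst (e r)) * a) (j (m.fst (e k)) * a)
          ≤ dist (j (m.fst (e r)) * a) (j (m.fst (e r)) * (j (e k) * a)) +
            dist (j (m.fst (e r)) * (j (e k) * a)) (j (m.fst (e k)) * a) := dist_triangle _ _ _
        _ < C * δ + δ := by linarith
        _ = δ + C * δ := by ring
    have h3 := hbound p hp
    have h4 := hbound q hq
    have htot : dist (j (m.fst (e p)) * a) (j (m.fst (e q)) * a)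
        ≤ dist (j (m.fst (e p)) * a) (j (m.fst (e k)) * a) +
          dist (j (m.fst (e q)) * a) (j (m.fst (e k)) * a) := dist_triangle_right _ _ _
    have hδval : δ + C * δ ≤ ε / 2 := by
      have h5 : C * δ = ε / 4 := by
        field_simp [hδ]
        rw [hδ, mul_div_assoc', div_mul_eq_mul_div, div_eq_iff (mul_pos four_pos hCpos).ne']; ring
      have h6 : δ ≤ ε / 4 := by
        rw [hδ]
        rw [div_le_div_iff₀ (by positivity) (by norm_num)]
        nlinarith
      linarith
    nlinarith [h3, h4, htot, hδval]
  choose L hLten using exL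
  -- the right multipliers, via star
  have hRten' : ∀ (m : 𝓜(ℂ, B)) (a : A),
      Tendsto (fun i => a * j (m.snd (e i))) atTop (nhds (star (L (star m) (star a)))) := by
    intro m a
    have h := (hLten (star m) (star a)).star
    refine h.congr fun i => ?_
    rw [DoubleCentralizer.star_fst, hsa, map_star, star_mul, star_star, star_star]
  obtain ⟨R, hRten⟩ : ∃ R : 𝓜(ℂ, B) → A → A,
      ∀ m a, Tendsto (fun i => a * j (m.snd (e i))) atTop (nhds (R m a)) :=
    ⟨_, hRten'⟩
  clear hRten'
  -- pointwise identities
  have hLj : ∀ (m : 𝓜(ℂ, B)) (b : B) (c : A), L m (j b * c) = j (m.fst b) * c := by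
    intro m b c
    refine tendsto_nhds_unique (hLten m (j b * c)) ?_
    have h1 : Tendsto (fun i => m.fst (e i * b)) atTop (nhds (m.fst b)) :=
      (m.fst.continuous.tendsto _).comp (hB1 b)
    have h2 : Tendsto (fun i => j (m.fst (e i * b)) * c) atTop (nhds (j (m.fst b) * c)) :=
      ((hiso.continuous.tendsto _).comp h1).mul_const c
    refine h2.congr fun i => ?_
    rw [hfstmul m (e i) b, map_mul, mul_assoc]
  have hRj : ∀ (m : 𝓜(ℂ, B)) (a : A) (b : B), R m (a * j b) = a * j (m.snd b) := by
    intro m a b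
    refine tendsto_nhds_unique (hRten m (a * j b)) ?_
    have h1 : Tendsto (fun i => m.snd (b * e i)) atTop (nhds (m.snd b)) :=
      (m.snd.continuous.tendsto _).comp (hB2 b)
    have h2 : Tendsto (fun i => a * j (m.snd (b * e i))) atTop (nhds (a * j (m.snd b))) :=
      ((hiso.continuous.tendsto _).comp h1).const_mul a
    refine h2.congr fun i => ?_
    rw [hsndmul m b (e i), map_mul, mul_assoc]
  have hLadd : ∀ (m : 𝓜(ℂ, B)) (a a' : A), L m (a + a') = L m a + L m a' := by
    intro m a a'
    refine tendsto_nhds_unique (hLten m (a + a')) ?_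
    refine ((hLten m a).add (hLten m a')).congr fun i => ?_
    rw [mul_add]
  have hLsmul : ∀ (m : 𝓜(ℂ, B)) (c : ℂ) (a : A), L m (c • a) = c • L m a := by
    intro m c a
    refine tendsto_nhds_unique (hLten m (c • a)) ?_
    refine ((hLten m a).const_smul c).congr fun i => ?_
    rw [mul_smul_comm]
  have hLnorm : ∀ (m : 𝓜(ℂ, B)) (a : A), ‖L m a‖ ≤ ‖m‖ * ‖a‖ := by
    intro m a
    refine le_of_tendsto (hLten m a).norm (Eventually.of_forall fun i => ?_)
    calc ‖j (m.fst (e i)) * a‖ ≤ ‖j (m.fst (e i))‖ * ‖a‖ := norm_mul_le _ _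
      _ ≤ ‖m‖ * ‖a‖ := by
          refine mul_le_mul_of_nonneg_right ?_ (norm_nonneg a)
          rw [NonUnitalStarAlgHom.norm_map j hj]
          calc ‖m.fst (e i)‖ ≤ ‖m.fst‖ * ‖e i‖ := m.fst.le_opNorm _
            _ ≤ ‖m.fst‖ * 1 := mul_le_mul_of_nonneg_left (hnorm i) (norm_nonneg _)
            _ = ‖m‖ := by rw [mul_one, DoubleCentralizer.norm_fst]
  have hRadd : ∀ (m : 𝓜(ℂ, B)) (a a' : A), R m (a + a') = R m a + R m a' := by
    intro m a a'
    refine tendsto_nhds_unique (hRten m (a + a')) ?_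
    refine ((hRten m a).add (hRten m a')).congr fun i => ?_
    rw [add_mul]
  have hRsmul : ∀ (m : 𝓜(ℂ, B)) (c : ℂ) (a : A), R m (c • a) = c • R m a := by
    intro m c a
    refine tendsto_nhds_unique (hRten m (c • a)) ?_
    refine ((hRten m a).const_smul c).congr fun i => ?_
    rw [smul_mul_assoc]
  have hRnorm : ∀ (m : 𝓜(ℂ, B)) (a : A), ‖R m a‖ ≤ ‖m‖ * ‖a‖ := by
    intro m a
    refine le_of_tendsto (hRten m a).norm (Eventually.of_forall fun i => ?_)
    calc ‖a * j (m.snd (e i))‖ ≤ ‖a‖ * ‖j (m.snd (e i))‖ := norm_mul_le _ _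
      _ ≤ ‖a‖ * ‖m‖ := by
          refine mul_le_mul_of_nonneg_left ?_ (norm_nonneg a)
          rw [NonUnitalStarAlgHom.norm_map j hj]
          calc ‖m.snd (e i)‖ ≤ ‖m.snd‖ * ‖e i‖ := m.snd.le_opNorm _
            _ ≤ ‖m.snd‖ * 1 := mul_le_mul_of_nonneg_left (hnorm i) (norm_nonneg _)
            _ = ‖m‖ := by rw [mul_one, DoubleCentralizer.norm_snd]
      _ = ‖m‖ * ‖a‖ := mul_comm _ _
  -- the key centrality-type lemma
  have hkey : ∀ (m : 𝓜(ℂ, B)) (b : B) (y : A), j b * L m y = j (m.snd b) * y := by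
    intro m b y
    refine tendsto_nhds_unique ((hLten m y).const_mul (j b)) ?_
    refine ((hA1 y).const_mul (j (m.snd b))).congr fun i => ?_
    rw [← mul_assoc, ← map_mul, m.central, map_mul, mul_assoc]
  have hcent : ∀ (m : 𝓜(ℂ, B)) (x y : A), R m x * y = x * L m y := by
    intro m x y
    refine tendsto_nhds_unique ((hRten m x).mul_const y) ?_
    refine (((hA1 (L m y)).const_mul x).congr fun i => ?_)
    rw [hkey m (e i) y, ← mul_assoc]
  -- construct the map
  obtain ⟨Φ₀, hfst, hsnd⟩ : ∃ Φ₀ : 𝓜(ℂ, B) → 𝓜(ℂ, A),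
      (∀ m a, (Φ₀ m).fst a = L m a) ∧ ∀ m a, (Φ₀ m).snd a = R m a := by
    refine ⟨fun m => ⟨(LinearMap.mkContinuous
        { toFun := L m, map_add' := hLadd m, map_smul' := hLsmul m } ‖m‖ (hLnorm m),
      LinearMap.mkContinuous
        { toFun := R m, map_add' := hRadd m, map_smul' := hRsmul m } ‖m‖ (hRnorm m)),
      fun x y => hcent m x y⟩, fun m a => rfl, fun m a => rfl⟩
  have hext : ∀ M N : 𝓜(ℂ, A), (∀ a, M.fst a = N.fst a) → (∀ a, M.snd a = N.snd a) → M = N := by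
    intro M N h1 h2
    exact DoubleCentralizer.ext _ _ _ _
      (Prod.ext (ContinuousLinearMap.ext h1) (ContinuousLinearMap.ext h2))
  have hextB : ∀ M N : 𝓜(ℂ, B), (∀ b, M.fst b = N.fst b) → (∀ b, M.snd b = N.snd b) → M = N := by
    intro M N h1 h2
    exact DoubleCentralizer.ext _ _ _ _
      (Prod.ext (ContinuousLinearMap.ext h1) (ContinuousLinearMap.ext h2))
  -- homomorphism properties
  have hΦadd : ∀ m m' : 𝓜(ℂ, B), Φ₀ (m + m') = Φ₀ m + Φ₀ m' := by
    intro m m'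
    refine hext _ _ (fun a => ?_) (fun a => ?_)
    · rw [hfst]
      have h1 : (Φ₀ m + Φ₀ m').fst a = L m a + L m' a := by
        rw [DoubleCentralizer.add_fst, ContinuousLinearMap.add_apply, hfst, hfst]
      rw [h1]
      refine tendsto_nhds_unique (hLten (m + m') a) ?_
      refine ((hLten m a).add (hLten m' a)).congr fun i => ?_
      rw [DoubleCentralizer.add_fst, ContinuousLinearMap.add_apply, map_add, add_mul]
    · rw [hsnd]
      have h1 : (Φ₀ m + Φ₀ m').snd a = R m a + R m' a := by
        rw [DoubleCentralizer.add_snd, ContinuousLinearMap.add_apply, hsnd, hsnd]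
      rw [h1]
      refine tendsto_nhds_unique (hRten (m + m') a) ?_
      refine ((hRten m a).add (hRten m' a)).congr fun i => ?_
      rw [DoubleCentralizer.add_snd, ContinuousLinearMap.add_apply, map_add, mul_add]
  have hΦsmul : ∀ (c : ℂ) (m : 𝓜(ℂ, B)), Φ₀ (c • m) = c • Φ₀ m := by
    intro c m
    refine hext _ _ (fun a => ?_) (fun a => ?_)
    · rw [hfst]
      have h1 : (c • Φ₀ m).fst a = c • L m a := by
        rw [DoubleCentralizer.smul_fst, ContinuousLinearMap.smul_apply, hfst]
      rw [h1]
      refine tendsto_nhds_unique (hLten (c • m) a) ?_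
      refine ((hLten m a).const_smul c).congr fun i => ?_
      rw [DoubleCentralizer.smul_fst, ContinuousLinearMap.smul_apply, map_smul, smul_mul_assoc]
    · rw [hsnd]
      have h1 : (c • Φ₀ m).snd a = c • R m a := by
        rw [DoubleCentralizer.smul_snd, ContinuousLinearMap.smul_apply, hsnd]
      rw [h1]
      refine tendsto_nhds_unique (hRten (c • m) a) ?_
      refine ((hRten m a).const_smul c).congr fun i => ?_
      rw [DoubleCentralizer.smul_snd, ContinuousLinearMap.smul_apply, map_smul, mul_smul_comm]
  have hΦzero : Φ₀ 0 = 0 := by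
    refine hext _ _ (fun a => ?_) (fun a => ?_)
    · rw [hfst]
      have h1 : (0 : 𝓜(ℂ, A)).fst a = 0 := by
        rw [DoubleCentralizer.zero_fst, ContinuousLinearMap.zero_apply]
      rw [h1]
      refine tendsto_nhds_unique (hLten 0 a) ?_
      refine tendsto_const_nhds.congr fun i => ?_
      rw [DoubleCentralizer.zero_fst, ContinuousLinearMap.zero_apply, map_zero, zero_mul]
    · rw [hsnd]
      have h1 : (0 : 𝓜(ℂ, A)).snd a = 0 := by
        rw [DoubleCentralizer.zero_snd, ContinuousLinearMap.zero_apply]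
      rw [h1]
      refine tendsto_nhds_unique (hRten 0 a) ?_
      refine tendsto_const_nhds.congr fun i => ?_
      rw [DoubleCentralizer.zero_snd, ContinuousLinearMap.zero_apply, map_zero, mul_zero]
  have hΦone : Φ₀ 1 = 1 := by
    refine hext _ _ (fun a => ?_) (fun a => ?_)
    · rw [hfst]
      have h1 : (1 : 𝓜(ℂ, A)).fst a = a := by
        rw [DoubleCentralizer.one_fst, ContinuousLinearMap.one_apply]
      rw [h1]
      refine tendsto_nhds_unique (hLten 1 a) ?_
      refine (hA1 a).congr fun i => ?_
      rw [DoubleCentralizer.one_fst, ContinuousLinearMap.one_apply]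
    · rw [hsnd]
      have h1 : (1 : 𝓜(ℂ, A)).snd a = a := by
        rw [DoubleCentralizer.one_snd, ContinuousLinearMap.one_apply]
      rw [h1]
      refine tendsto_nhds_unique (hRten 1 a) ?_
      refine (hA2 a).congr fun i => ?_
      rw [DoubleCentralizer.one_snd, ContinuousLinearMap.one_apply]
  have hΦmul : ∀ m m' : 𝓜(ℂ, B), Φ₀ (m * m') = Φ₀ m * Φ₀ m' := by
    intro m m'
    refine hext _ _ (fun a => ?_) (fun a => ?_)
    · rw [hfst]
      have h1 : (Φ₀ m * Φ₀ m').fst a = L m (L m' a) := by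
        rw [DoubleCentralizer.mul_fst, ContinuousLinearMap.mul_apply, hfst, hfst]
      rw [h1]
      refine tendsto_nhds_unique (hLten (m * m') a) ?_
      have h2 : Tendsto (fun i => (Φ₀ m).fst (j (m'.fst (e i)) * a)) atTop
          (nhds ((Φ₀ m).fst (L m' a))) :=
        ((Φ₀ m).fst.continuous.tendsto _).comp (hLten m' a)
      rw [hfst] at h2
      refine h2.congr fun i => ?_
      rw [hfst, hLj, DoubleCentralizer.mul_fst, ContinuousLinearMap.mul_apply]
    · rw [hsnd]
      have h1 : (Φ₀ m * Φ₀ m').snd a = R m' (R m a) := by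
        rw [DoubleCentralizer.mul_snd, ContinuousLinearMap.mul_apply, hsnd, hsnd]
      rw [h1]
      refine tendsto_nhds_unique (hRten (m * m') a) ?_
      have h2 : Tendsto (fun i => (Φ₀ m').snd (a * j (m.snd (e i)))) atTop
          (nhds ((Φ₀ m').snd (R m a))) :=
        ((Φ₀ m').snd.continuous.tendsto _).comp (hRten m a)
      rw [hsnd] at h2
      refine h2.congr fun i => ?_
      rw [hsnd, hRj, DoubleCentralizer.mul_snd, ContinuousLinearMap.mul_apply]
  have hΦstar : ∀ m : 𝓜(ℂ, B), Φ₀ (star m) = star (Φ₀ m) := by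
    intro m
    refine hext _ _ (fun a => ?_) (fun a => ?_)
    · rw [hfst]
      have h1 : (star (Φ₀ m)).fst a = star (R m (star a)) := by
        rw [DoubleCentralizer.star_fst, hsnd]
      rw [h1]
      refine tendsto_nhds_unique (hLten (star m) a) ?_
      refine (hRten m (star a)).star.congr fun i => ?_
      rw [DoubleCentralizer.star_fst, hsa, map_star, star_mul, star_star]
    · rw [hsnd]
      have h1 : (star (Φ₀ m)).snd a = star (L m (star a)) := by
        rw [DoubleCentralizer.star_snd, hfst]
      rw [h1]
      refine tendsto_nhds_unique (hRten (star m) a) ?_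
      refine (hLten m (star a)).star.congr fun i => ?_
      rw [DoubleCentralizer.star_snd, hsa, map_star, star_mul, star_star]
  have hΦcoe : ∀ b : B, Φ₀ (b : 𝓜(ℂ, B)) = ((j b : A) : 𝓜(ℂ, A)) := by
    intro b
    refine hext _ _ (fun a => ?_) (fun a => ?_)
    · rw [hfst]
      have h1 : ((j b : A) : 𝓜(ℂ, A)).fst a = j b * a := by
        rw [DoubleCentralizer.coe_fst, ContinuousLinearMap.mul_apply']
      rw [h1]
      refine tendsto_nhds_unique (hLten (b : 𝓜(ℂ, B)) a) ?_
      refine ((hA1 a).const_mul (j b)).congr fun i => ?_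
      rw [DoubleCentralizer.coe_fst, ContinuousLinearMap.mul_apply', map_mul, mul_assoc]
    · rw [hsnd]
      have h1 : ((j b : A) : 𝓜(ℂ, A)).snd a = a * j b := by
        rw [DoubleCentralizer.coe_snd, ContinuousLinearMap.flip_apply,
          ContinuousLinearMap.mul_apply']
      rw [h1]
      refine tendsto_nhds_unique (hRten (b : 𝓜(ℂ, B)) a) ?_
      refine ((hA2 a).mul_const (j b)).congr fun i => ?_
      rw [DoubleCentralizer.coe_snd, ContinuousLinearMap.flip_apply,
        ContinuousLinearMap.mul_apply', map_mul, mul_assoc]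
  -- injectivity
  have hΦinj : Function.Injective Φ₀ := by
    intro m m' h
    have hfsteq : ∀ a, L m a = L m' a := fun a => by rw [← hfst, ← hfst, h]
    have h1 : ∀ b, m.fst b = m'.fst b := by
      intro b
      apply hj
      refine hcancelA _ _ fun c => ?_
      rw [← hLj, ← hLj, hfsteq]
    have h2 : ∀ x, m.snd x = m'.snd x := by
      intro x
      refine hcancelB _ _ fun y => ?_
      rw [m.central, m'.central, h1]
    exact hextB m m' h1 h2
  -- corona condition
  have hΦcorona : ∀ m : 𝓜(ℂ, B), ∀ a : A, Φ₀ m = (a : 𝓜(ℂ, A)) → ∃ b : B, m = (b : 𝓜(ℂ, B)) := by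
    intro m a hma
    have hLa : ∀ x, L m x = a * x := by
      intro x
      rw [← hfst, hma, DoubleCentralizer.coe_fst, ContinuousLinearMap.mul_apply']
    have h1 : ∀ i, j (m.fst (e i)) = a * j (e i) := by
      intro i
      refine hcancelA _ _ fun c => ?_
      rw [← hLj m (e i) c, hLa, mul_assoc]
    have h2 : Tendsto (fun i => j (m.fst (e i))) atTop (nhds a) := by
      simp only [h1]
      exact hA2 a
    have ha : a ∈ Set.range j := by
      rw [← hrange.closure_eq]
      exact mem_closure_of_tendsto h2 (Eventually.of_forall fun i => ⟨m.fst (e i), rfl⟩)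
    obtain ⟨b₀, hb₀⟩ := ha
    have h3 : Tendsto (fun i => m.fst (e i)) atTop (nhds b₀) := by
      rw [hemb.tendsto_nhds_iff]
      simpa [Function.comp_def, hb₀] using h2
    have h4 : ∀ b, m.fst b = b₀ * b := by
      intro b
      refine tendsto_nhds_unique
        (((m.fst.continuous.tendsto _).comp (hB1 b) :
          Tendsto (fun i => m.fst (e i * b)) atTop (nhds (m.fst b)))) ?_
      refine (h3.mul_const b).congr fun i => (hfstmul m (e i) b).symm
    have h5 : ∀ x, m.snd x = x * b₀ := by
      intro x
      refine hcancelB _ _ fun y => ?_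
      rw [m.central, h4, ← mul_assoc]
    refine ⟨b₀, hextB _ _ (fun b => ?_) (fun x => ?_)⟩
    · rw [h4, DoubleCentralizer.coe_fst, ContinuousLinearMap.mul_apply']
    · rw [h5, DoubleCentralizer.coe_snd, ContinuousLinearMap.flip_apply,
        ContinuousLinearMap.mul_apply']
  -- assemble
  refine ⟨{ toFun := Φ₀, map_one' := hΦone, map_mul' := hΦmul, map_zero' := hΦzero,
            map_add' := hΦadd, commutes' := ?_, map_star' := hΦstar }, ?_, ?_, ?_⟩
  · intro c
    show Φ₀ (algebraMap ℂ _ c) = algebraMap ℂ _ c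
    rw [Algebra.algebraMap_eq_smul_one, Algebra.algebraMap_eq_smul_one, hΦsmul, hΦone]
  · exact hΦinj
  · exact hΦcoe
  · rintro m ⟨a, hma⟩
    exact hΦcorona m a hma
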